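/- Let q be a prime and ℓ ≥ 1. The fraction of ℓ×ℓ Toeplitz matrices over the finite field Z/qZ that are nonsingular is exactly 1 - 1/q. Equivalently, the number of invertible ℓ×ℓ Toeplitz matrices over F_q is (q-1) * q^(2ℓ-2). -/

import Mathlib

set_option linter.unusedSectionVars false
set_option maxHeartbeats 1000000

open Polynomial Finset

namespace ToeplitzAux

variable {F : Type} [Field F] [DecidableEq F]

/-- The polynomial with coefficient vector `v` (degree `< n`). -/
noncomputable def ofVec {n : ℕ} (v : Fin n → F) : F[X] :=
  ∑ j : Fin n, C (v j) * X ^ (j : ℕ)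

lemma coeff_ofVec {n : ℕ} (v : Fin n → F) (k : ℕ) :
    (ofVec v).coeff k = if h : k < n then v ⟨k, h⟩ else 0 := by
  rw [ofVec, finset_sum_coeff]
  simp only [coeff_C_mul, coeff_X_pow]
  split_ifs with h
  · rw [Finset.sum_eq_single (⟨k, h⟩ : Fin n)]
    · simp
    · intro j _ hj
      have hk : k ≠ (j : ℕ) := by
        intro hk; exact hj (by ext; simp [← hk])
      simp [hk]
    · simp
  · refine Finset.sum_eq_zero fun j _ => ?_
    have hk : k ≠ (j : ℕ) := fun hk => h (hk ▸ j.isLt)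
    simp [hk]

lemma degree_ofVec {n : ℕ} (v : Fin n → F) : (ofVec v).degree < (n : ℕ) := by
  rw [degree_lt_iff_coeff_zero]
  intro m hm
  rw [coeff_ofVec]
  have h : ¬ m < n := not_lt.2 hm
  simp [h]

lemma natDegree_ofVec_lt {n : ℕ} (hn : 1 ≤ n) (v : Fin n → F) :
    (ofVec v).natDegree < n := by
  by_cases h : ofVec v = 0
  · simpa [h] using (show 0 < n by omega)
  · exact (natDegree_lt_iff_degree_lt h).2 (degree_ofVec v)

lemma ofVec_eq_self {n : ℕ} {w : F[X]} (hw : w.degree < (n : ℕ)) :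
    ofVec (fun j : Fin n => w.coeff j) = w := by
  ext k
  rw [coeff_ofVec]
  split_ifs with h
  · rfl
  · exact (coeff_eq_zero_of_degree_lt (hw.trans_le (by exact_mod_cast not_lt.1 h))).symm

lemma ofVec_inj {n : ℕ} {v v' : Fin n → F} (h : ofVec v = ofVec v') : v = v' := by
  funext j
  have := congrArg (fun p => Polynomial.coeff p (j : ℕ)) h
  simpa [coeff_ofVec, j.isLt] using this

lemma ofVec_sub {n : ℕ} (v v' : Fin n → F) : ofVec (v - v') = ofVec v - ofVec v' := by
  simp [ofVec, sub_mul, Finset.sum_sub_distrib]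

/-- The LFSR sequence generated by `u / f`, read off through coefficients of
`x^i * u  mod f`. -/
lemma ofVec_neg {n : ℕ} (v : Fin n → F) : ofVec (-v) = - ofVec v := by
  have h0 : ofVec (0 : Fin n → F) = 0 := by simp [ofVec]
  have := ofVec_sub (0 : Fin n → F) v
  simpa [h0] using this

noncomputable def seqP (n : ℕ) (f u : F[X]) (i : ℕ) : F := ((X ^ i * u) %ₘ f).coeff (n - 1)

lemma seqP_sub (n : ℕ) (f u u' : F[X]) (i : ℕ) :
    seqP n f (u - u') i = seqP n f u i - seqP n f u' i := by
  simp [seqP, mul_sub, sub_modByMonic]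

lemma Lstar (n : ℕ) (f u : F[X]) {g : F[X]} {m : ℕ} (hg : g.natDegree < m) (i : ℕ) :
    ∑ j ∈ range m, g.coeff j * seqP n f u (i + j)
      = ((g * (X ^ i * u)) %ₘ f).coeff (n - 1) := by
  conv_rhs => rw [g.as_sum_range' m hg]
  rw [Finset.sum_mul]
  have hmod := map_sum (modByMonicHom f)
      (fun j => (monomial j (g.coeff j)) * (X ^ i * u)) (range m)
  simp only [modByMonicHom_apply] at hmod
  rw [hmod, finset_sum_coeff]
  refine Finset.sum_congr rfl fun j _ => ?_
  have hterm : (monomial j (g.coeff j)) * (X ^ i * u) = g.coeff j • (X ^ (i + j) * u) := by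
    rw [← C_mul_X_pow_eq_monomial, smul_eq_C_mul, pow_add]; ring
  rw [hterm, smul_modByMonic, coeff_smul, smul_eq_mul, seqP]

lemma Z1 {n : ℕ} {f : F[X]} (hf : f.Monic) (hfd : f.natDegree = n) {w : F[X]}
    (h : ∀ i, i < n → ((X ^ i * w) %ₘ f).coeff (n - 1) = 0) : w %ₘ f = 0 := by
  by_contra hw
  set w' := w %ₘ f with hw'def
  have hfne : f ≠ 0 := hf.ne_zero
  have hdeg : w'.degree < f.degree := degree_modByMonic_lt w hf
  have hfdeg : f.degree = (n : ℕ) := by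
    rw [degree_eq_natDegree hfne, hfd]
  have hwd : w'.natDegree < n := by
    rw [← hfd]
    exact natDegree_lt_natDegree hw hdeg
  set e := w'.natDegree
  set i := n - 1 - e with hi
  have hin : i < n := by omega
  have hsplit : X ^ i * w = X ^ i * w' + f * (X ^ i * (w /ₘ f)) := by
    conv_lhs => rw [← modByMonic_add_div w f]
    ring
  have hmod1 : (X ^ i * w) %ₘ f = (X ^ i * w') %ₘ f := by
    rw [hsplit, add_modByMonic, (modByMonic_eq_zero_iff_dvd hf).2 ⟨_, rfl⟩, add_zero]
  have hdegw' : (X ^ i * w').degree < f.degree := by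
    rw [hfdeg, degree_mul, degree_X_pow, degree_eq_natDegree hw]
    exact_mod_cast (by omega : i + e < n)
  have hmod2 : (X ^ i * w') %ₘ f = X ^ i * w' := (modByMonic_eq_self_iff hf).2 hdegw'
  have hco := h i hin
  rw [hmod1, hmod2] at hco
  have hn1 : n - 1 = e + i := by omega
  rw [hn1, coeff_X_pow_mul] at hco
  exact (leadingCoeff_ne_zero.2 hw) hco

/-- the `n × n` Hankel matrix of a sequence of `2n-1` entries. -/
def hankM (n : ℕ) (a : Fin (2 * n - 1) → F) : Matrix (Fin n) (Fin n) F :=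
  fun i j => a ⟨(i : ℕ) + j, by have := i.isLt; have := j.isLt; omega⟩

noncomputable def seqVec (n : ℕ) (f u : F[X]) : Fin (2 * n - 1) → F := fun k => seqP n f u k

lemma hank_mulVec_seq {n : ℕ} (hn : 1 ≤ n) (f u : F[X]) (v : Fin n → F) (i : Fin n) :
    (hankM n (seqVec n f u)).mulVec v i
      = ((ofVec v * (X ^ (i : ℕ) * u)) %ₘ f).coeff (n - 1) := by
  have h1 : (hankM n (seqVec n f u)).mulVec v i
      = ∑ j ∈ range n, (ofVec v).coeff j * seqP n f u ((i : ℕ) + j) := by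
    rw [Finset.sum_range fun j => (ofVec v).coeff j * seqP n f u ((i : ℕ) + j)]
    simp only [Matrix.mulVec, dotProduct, hankM, seqVec]
    refine Finset.sum_congr rfl fun j _ => ?_
    rw [coeff_ofVec]
    simp [j.isLt, mul_comm]
  rw [h1, Lstar n f u (natDegree_ofVec_lt hn v) (i : ℕ)]

lemma isUnit_det_hank_iff {n : ℕ} (hn : 1 ≤ n) {f u : F[X]} (hf : f.Monic)
    (hfd : f.natDegree = n) (hu : u.degree < (n : ℕ)) :
    IsUnit (hankM n (seqVec n f u)).det ↔ IsCoprime f u := by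
  rw [isUnit_iff_ne_zero]
  have hfne : f ≠ 0 := hf.ne_zero
  have hfdeg : f.degree = (n : WithBot ℕ) := by rw [degree_eq_natDegree hfne, hfd]
  constructor
  · -- det ≠ 0 → coprime ; contrapositive
    intro hdet
    by_contra hcop
    apply hdet
    rw [← Matrix.exists_mulVec_eq_zero_iff]
    -- build kernel vector from gcd
    have hgcd : ¬ IsUnit (gcd f u) := fun h => hcop ((gcd_isUnit_iff f u).1 h)
    obtain ⟨f₁, hf₁⟩ := gcd_dvd_left f u
    obtain ⟨u₁, hu₁⟩ := gcd_dvd_right f u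
    obtain ⟨d, hD⟩ : ∃ d, gcd f u = d := ⟨_, rfl⟩
    rw [hD] at hf₁ hu₁ hgcd
    have hd0 : d ≠ 0 := by rintro rfl; rw [zero_mul] at hf₁; exact hfne hf₁
    have hdpos : 1 ≤ d.natDegree := by
      rcases Nat.eq_zero_or_pos d.natDegree with h0 | h
      · exfalso
        apply hgcd
        rw [isUnit_iff_degree_eq_zero]
        rw [degree_eq_natDegree hd0, h0]; rfl
      · exact h
    have hf₁0 : f₁ ≠ 0 := by rintro rfl; rw [mul_zero] at hf₁; exact hfne hf₁
    have hm : f₁.natDegree = n - d.natDegree := by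
      have := natDegree_mul hd0 hf₁0
      rw [← hf₁, hfd] at this
      omega
    set m := f₁.natDegree
    set g : F[X] := X ^ (n - 1 - m) * f₁ with hg
    have hg0 : g ≠ 0 := mul_ne_zero (pow_ne_zero _ X_ne_zero) hf₁0
    have hgd : g.natDegree = n - 1 := by
      rw [hg, natDegree_mul (pow_ne_zero _ X_ne_zero) hf₁0, natDegree_X_pow]
      omega
    set v : Fin n → F := fun j => g.coeff j with hv
    have hvg : ofVec v = g := by
      rw [hv]
      exact ofVec_eq_self (by rw [degree_eq_natDegree hg0, hgd]; exact_mod_cast (by omega : n - 1 < n))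
    refine ⟨v, ?_, ?_⟩
    · intro h0
      have : g.coeff (n - 1) ≠ 0 := by rw [← hgd]; exact leadingCoeff_ne_zero.2 hg0
      apply this
      have := congrFun h0 ⟨n - 1, by omega⟩
      simpa [hv] using this
    · funext i
      rw [hank_mulVec_seq hn f u v i, hvg]
      have hdvd : f ∣ g * (X ^ (i : ℕ) * u) := by
        refine ⟨X ^ (n - 1 - m) * X ^ (i : ℕ) * u₁, ?_⟩
        rw [hg, hf₁, hu₁]
        ring
      rw [(modByMonic_eq_zero_iff_dvd hf).2 hdvd]
      simp
  · -- coprime → det ≠ 0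
    intro hcop hdet
    obtain ⟨v, hv0, hvk⟩ := (Matrix.exists_mulVec_eq_zero_iff).2 hdet
    set g : F[X] := ofVec v with hgdef
    have hg0 : g ≠ 0 := by
      intro h0
      apply hv0
      have : ofVec v = ofVec (0 : Fin n → F) := by simpa [ofVec, hgdef] using h0
      exact ofVec_inj this
    have hkey : (g * u) %ₘ f = 0 := by
      apply Z1 hf hfd
      intro i hi
      have := congrFun hvk ⟨i, hi⟩
      rw [hank_mulVec_seq hn f u v ⟨i, hi⟩] at this
      simp only [Pi.zero_apply] at this
      rw [show X ^ i * (g * u) = g * (X ^ i * u) by ring]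
      exact this
    have hdvd : f ∣ g * u := (modByMonic_eq_zero_iff_dvd hf).1 hkey
    have : f ∣ g := hcop.dvd_of_dvd_mul_right hdvd
    have : g = 0 := eq_zero_of_dvd_of_degree_lt this (by rw [hfdeg]; exact degree_ofVec v)
    exact hg0 this

lemma monic_fc {n : ℕ} (c : Fin n → F) : (X ^ n - ofVec c).Monic :=
  monic_X_pow_sub (degree_ofVec c)

lemma degree_fc {n : ℕ} (c : Fin n → F) : (X ^ n - ofVec c).degree = (n : WithBot ℕ) := by
  rw [degree_sub_eq_left_of_degree_lt (by rw [degree_X_pow]; exact degree_ofVec c), degree_X_pow]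

lemma natDegree_fc {n : ℕ} (hn : 1 ≤ n) (c : Fin n → F) : (X ^ n - ofVec c).natDegree = n :=
  natDegree_eq_of_degree_eq_some (degree_fc c)

lemma seq_rec {n : ℕ} (hn : 1 ≤ n) (c : Fin n → F) (u : F[X]) (i : ℕ) :
    seqP n (X ^ n - ofVec c) u (i + n)
      = ∑ j : Fin n, c j * seqP n (X ^ n - ofVec c) u (i + j) := by
  set f : F[X] := X ^ n - ofVec c with hfdef
  have hf : f.Monic := monic_fc c
  have hfd : f.natDegree = n := natDegree_fc hn c
  have h := Lstar n f u (g := f) (m := n + 1) (by omega) i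
  rw [(modByMonic_eq_zero_iff_dvd hf).2 ⟨X ^ i * u, rfl⟩] at h
  simp only [coeff_zero] at h
  rw [Finset.sum_range_succ] at h
  have hcn : f.coeff n = 1 := by
    rw [hfdef, coeff_sub, coeff_X_pow, coeff_ofVec]
    simp
  have hcj : ∀ j (hj : j < n), f.coeff j = - c ⟨j, hj⟩ := by
    intro j hj
    rw [hfdef, coeff_sub, coeff_X_pow, coeff_ofVec]
    simp [hj, Nat.ne_of_lt hj]
  rw [hcn, one_mul] at h
  have h2 : ∑ j ∈ range n, f.coeff j * seqP n f u (i + j)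
      = - ∑ j : Fin n, c j * seqP n f u (i + j) := by
    rw [Finset.sum_range fun j => f.coeff j * seqP n f u (i + j), ← Finset.sum_neg_distrib]
    refine Finset.sum_congr rfl fun j _ => ?_
    rw [hcj j j.isLt]
    simp
  rw [h2] at h
  linear_combination h

noncomputable def Ef (n : ℕ) (f : F[X]) : (Fin n → F) → (Fin n → F) :=
  fun v i => seqP n f (ofVec v) i

lemma Ef_bijective [Fintype F] {n : ℕ} {f : F[X]} (hf : f.Monic) (hfd : f.natDegree = n) :
    Function.Bijective (Ef (F := F) n f) := by
  rw [← Finite.injective_iff_bijective]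
  intro v v' h
  have hz : ∀ i, i < n → ((X ^ i * (ofVec v - ofVec v')) %ₘ f).coeff (n - 1) = 0 := by
    intro i hi
    have hthis := congrFun h ⟨i, hi⟩
    simp only [Ef, Fin.val_mk] at hthis
    show seqP n f (ofVec v - ofVec v') i = 0
    rw [seqP_sub, hthis, sub_self]
  have h0 : (ofVec v - ofVec v') %ₘ f = 0 := Z1 hf hfd hz
  have hdeg : (ofVec v - ofVec v').degree < f.degree := by
    rw [degree_eq_natDegree hf.ne_zero, hfd]
    exact lt_of_le_of_lt (degree_sub_le _ _) (max_lt (degree_ofVec v) (degree_ofVec v'))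
  rw [(modByMonic_eq_self_iff hf).2 hdeg] at h0
  exact ofVec_inj (sub_eq_zero.1 h0)

noncomputable def piMap (n : ℕ) (p : (Fin n → F) × (Fin n → F)) : Fin (2 * n - 1) → F :=
  seqVec n (X ^ n - ofVec p.1) (ofVec p.2)

def SP (n : ℕ) (a : Fin (2 * n - 1) → F) (c : Fin n → F) : Prop :=
  ∀ (i : Fin n) (_ : (i : ℕ) < n - 1),
    (hankM n a).mulVec c i = a ⟨(i : ℕ) + n, by have := i.isLt; omega⟩

lemma hank_mulVec_eq (n : ℕ) (a : Fin (2 * n - 1) → F) (c : Fin n → F) (i : Fin n) :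
    (hankM n a).mulVec c i
      = ∑ j : Fin n, a ⟨(i : ℕ) + j, by have := i.isLt; have := j.isLt; omega⟩ * c j := by
  simp [hankM, Matrix.mulVec, dotProduct]

lemma fiber_mem_SP {n : ℕ} (hn : 1 ≤ n) {a : Fin (2 * n - 1) → F} {c v : Fin n → F}
    (hp : piMap n (c, v) = a) : SP n a c := by
  intro i hi
  have hseq : ∀ k : Fin (2 * n - 1),
      seqP n (X ^ n - ofVec c) (ofVec v) (k : ℕ) = a k := fun k => congrFun hp k
  rw [hank_mulVec_eq]
  calc ∑ j : Fin n, a ⟨(i : ℕ) + j, by have := i.isLt; have := j.isLt; omega⟩ * c j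
      = ∑ j : Fin n, c j * seqP n (X ^ n - ofVec c) (ofVec v) ((i : ℕ) + j) := by
        refine Finset.sum_congr rfl fun j _ => ?_
        rw [← hseq ⟨(i : ℕ) + j, by have := i.isLt; have := j.isLt; omega⟩]
        exact mul_comm _ _
    _ = seqP n (X ^ n - ofVec c) (ofVec v) ((i : ℕ) + n) := (seq_rec hn _ _ _).symm
    _ = a ⟨(i : ℕ) + n, by have := i.isLt; omega⟩ :=
        hseq ⟨(i : ℕ) + n, by have := i.isLt; omega⟩

lemma fiber_exists [Fintype F] {n : ℕ} (hn : 1 ≤ n) {a : Fin (2 * n - 1) → F} {c : Fin n → F}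
    (hc : SP n a c) : ∃ v, piMap n (c, v) = a := by
  obtain ⟨v, hv⟩ := (Ef_bijective (monic_fc c) (natDegree_fc hn c)).surjective
    (fun i : Fin n => a ⟨(i : ℕ), by have := i.isLt; omega⟩)
  refine ⟨v, ?_⟩
  have claim : ∀ m, ∀ hm : m < 2 * n - 1,
      seqP n (X ^ n - ofVec c) (ofVec v) m = a ⟨m, hm⟩ := by
    intro m
    induction m using Nat.strong_induction_on with
    | _ m IH =>
      intro hm
      by_cases hmn : m < n
      · have := congrFun hv ⟨m, hmn⟩
        simpa [Ef] using this
      · have hrec := seq_rec hn c (ofVec v) (m - n)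
        have hmn' : m - n + n = m := by omega
        rw [hmn'] at hrec
        rw [hrec]
        have hcond := hc ⟨m - n, by omega⟩ (by simpa using (by omega : m - n < n - 1))
        rw [hank_mulVec_eq] at hcond
        calc ∑ j : Fin n, c j * seqP n (X ^ n - ofVec c) (ofVec v) (m - n + j)
            = ∑ j : Fin n,
                a ⟨(m - n : ℕ) + j, by have := j.isLt; omega⟩ * c j := by
              refine Finset.sum_congr rfl fun j _ => ?_
              rw [IH (m - n + (j : ℕ)) (by have := j.isLt; omega) (by have := j.isLt; omega),
                mul_comm]
          _ = a ⟨m, hm⟩ := by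
              rw [hcond]
              congr 1
              ext
              simp
              omega
  funext k
  have := claim (k : ℕ) k.isLt
  simpa [piMap, seqVec] using this

lemma fiber_equiv_SP [Fintype F] {n : ℕ} (hn : 1 ≤ n) (a : Fin (2 * n - 1) → F) :
    Nonempty ({p : (Fin n → F) × (Fin n → F) // piMap n p = a} ≃ {c : Fin n → F // SP n a c}) := by
  refine ⟨Equiv.ofBijective (fun p => ⟨p.1.1, fiber_mem_SP (v := p.1.2) hn p.2⟩) ⟨?_, ?_⟩⟩
  · rintro ⟨⟨c, v⟩, hp⟩ ⟨⟨c', v'⟩, hp'⟩ hcc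
    have hcval : c = c' := congrArg Subtype.val hcc
    subst hcval
    have hv : v = v' := by
      apply (Ef_bijective (monic_fc c) (natDegree_fc hn c)).injective
      funext i
      have h1 : Ef n (X ^ n - ofVec c) v i = a ⟨(i : ℕ), by have := i.isLt; omega⟩ :=
        congrFun hp ⟨(i : ℕ), by have := i.isLt; omega⟩
      have h2 : Ef n (X ^ n - ofVec c) v' i = a ⟨(i : ℕ), by have := i.isLt; omega⟩ :=
        congrFun hp' ⟨(i : ℕ), by have := i.isLt; omega⟩
      rw [h1, h2]
    subst hv
    rfl
  · rintro ⟨c, hc⟩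
    obtain ⟨v, hv⟩ := fiber_exists hn hc
    exact ⟨⟨(c, v), hv⟩, rfl⟩

lemma SP_card [Fintype F] {n : ℕ} (hn : 1 ≤ n) (a : Fin (2 * n - 1) → F)
    (ha : IsUnit (hankM n a).det) :
    Nat.card {c : Fin n → F // SP n a c} = Fintype.card F := by
  classical
  haveI := (hankM n a).invertibleOfIsUnitDet ha
  let e : (Fin n → F) ≃ (Fin n → F) :=
    { toFun := (hankM n a).mulVec
      invFun := (hankM n a)⁻¹.mulVec
      left_inv := fun w => by
        rw [Matrix.mulVec_mulVec, Matrix.nonsing_inv_mul _ ha, Matrix.one_mulVec]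
      right_inv := fun w => by
        rw [Matrix.mulVec_mulVec, Matrix.mul_nonsing_inv _ ha, Matrix.one_mulVec] }
  have e2 : {c : Fin n → F // SP n a c} ≃
      {w : Fin n → F // ∀ (i : Fin n) (_ : (i : ℕ) < n - 1),
        w i = a ⟨(i : ℕ) + n, by have := i.isLt; omega⟩} :=
    e.subtypeEquiv (fun c => Iff.rfl)
  have e3 : {w : Fin n → F // ∀ (i : Fin n) (_ : (i : ℕ) < n - 1),
      w i = a ⟨(i : ℕ) + n, by have := i.isLt; omega⟩} ≃ F :=
    { toFun := fun w => w.1 ⟨n - 1, by omega⟩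
      invFun := fun t => ⟨fun i => if h : (i : ℕ) < n - 1
          then a ⟨(i : ℕ) + n, by have := i.isLt; omega⟩ else t,
        fun i hi => dif_pos hi⟩
      left_inv := by
        rintro ⟨w, hw⟩
        apply Subtype.ext
        funext i
        by_cases h : (i : ℕ) < n - 1
        · simp only [dif_pos h]
          exact (hw i h).symm
        · simp only [dif_neg h]
          have hieq : i = ⟨n - 1, by omega⟩ := by
            ext; simp; have := i.isLt; omega
          rw [hieq]
      right_inv := by
        intro t
        simp }
  rw [Nat.card_congr (e2.trans e3), Nat.card_eq_fintype_card]

lemma fiber_card [Fintype F] {n : ℕ} (hn : 1 ≤ n) (a : Fin (2 * n - 1) → F)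
    (ha : IsUnit (hankM n a).det) :
    Nat.card {p : (Fin n → F) × (Fin n → F) // piMap n p = a} = Fintype.card F := by
  obtain ⟨e⟩ := fiber_equiv_SP hn a
  rw [Nat.card_congr e]
  exact SP_card hn a ha

lemma count_main [Fintype F] {n : ℕ} (hn : 1 ≤ n) :
    (Fintype.card F) * Nat.card {a : Fin (2 * n - 1) → F // IsUnit (hankM n a).det}
      = Nat.card {p : (Fin n → F) × (Fin n → F) //
          IsCoprime (X ^ n - ofVec p.1) (ofVec p.2)} := by
  classical
  have hiff : ∀ p : (Fin n → F) × (Fin n → F),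
      IsUnit (hankM n (piMap n p)).det ↔ IsCoprime (X ^ n - ofVec p.1) (ofVec p.2) := fun p =>
    isUnit_det_hank_iff hn (monic_fc p.1) (natDegree_fc hn p.1) (degree_ofVec p.2)
  rw [← Nat.card_congr (Equiv.subtypeEquivRight hiff)]
  set A := {a : Fin (2 * n - 1) → F // IsUnit (hankM n a).det} with hA
  let π' : {p : (Fin n → F) × (Fin n → F) // IsUnit (hankM n (piMap n p)).det} → A :=
    fun p => ⟨piMap n p.1, p.2⟩
  have e1 := Equiv.sigmaFiberEquiv π'
  have e2 : ∀ x : A, {p' // π' p' = x} ≃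
      {p : (Fin n → F) × (Fin n → F) // piMap n p = (x : Fin (2 * n - 1) → F)} :=
    fun x =>
    { toFun := fun p' => ⟨p'.1.1, congrArg Subtype.val p'.2⟩
      invFun := fun pp => ⟨⟨pp.1, by rw [show piMap n pp.1 = _ from pp.2]; exact x.2⟩,
        Subtype.ext pp.2⟩
      left_inv := fun p' => Subtype.ext (Subtype.ext rfl)
      right_inv := fun pp => Subtype.ext rfl }
  have h1 : Fintype.card {p : (Fin n → F) × (Fin n → F) // IsUnit (hankM n (piMap n p)).det}
      = ∑ x : A, Fintype.card {p' // π' p' = x} := by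
    rw [← Fintype.card_sigma]
    exact (Fintype.card_congr e1).symm
  have h2 : ∀ x : A, Fintype.card {p' // π' p' = x} = Fintype.card F := by
    intro x
    rw [Fintype.card_congr (e2 x), ← Nat.card_eq_fintype_card]
    exact fiber_card hn x.1 x.2
  rw [Nat.card_eq_fintype_card, Nat.card_eq_fintype_card, h1]
  rw [Finset.sum_congr rfl fun x _ => h2 x, Finset.sum_const, Finset.card_univ, smul_eq_mul,
    mul_comm]

/-- coprime pairs (monic of degree `m`, arbitrary of degree `< m`). -/
def CPP (F : Type) [Field F] (m : ℕ) :=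
  {p : F[X] × F[X] // p.1.Monic ∧ p.1.natDegree = m ∧ p.2.degree < (m : ℕ) ∧ IsCoprime p.1 p.2}

def PairP (F : Type) [Field F] (m : ℕ) :=
  {p : F[X] × F[X] // p.1.Monic ∧ p.1.natDegree = m ∧ p.2.degree < (m : ℕ)}

def MonP (F : Type) [Field F] (k : ℕ) := {f : F[X] // f.Monic ∧ f.natDegree = k}

lemma monp_aux {k : ℕ} {f : F[X]} (hf : f.Monic) (hfd : f.natDegree = k) :
    (f - X ^ k).degree < (k : WithBot ℕ) := by
  have h1 : f.degree = (k : WithBot ℕ) := by rw [degree_eq_natDegree hf.ne_zero, hfd]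
  have hd : f.degree = (X ^ k : F[X]).degree := by rw [h1, degree_X_pow]
  have hlc : f.leadingCoeff = (X ^ k : F[X]).leadingCoeff := by
    rw [hf.leadingCoeff, leadingCoeff_X_pow]
  have := degree_sub_lt hd hf.ne_zero hlc
  rwa [h1] at this

noncomputable def monEquiv (k : ℕ) : MonP F k ≃ (Fin k → F) where
  toFun f := fun j => f.1.coeff j
  invFun v := ⟨X ^ k + ofVec v, monic_X_pow_add (degree_ofVec v), by
    rw [natDegree_eq_of_degree_eq_some]
    rw [degree_add_eq_left_of_degree_lt (by rw [degree_X_pow]; exact degree_ofVec v),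
      degree_X_pow]⟩
  left_inv := by
    rintro ⟨f, hf, hfd⟩
    apply Subtype.ext
    simp only
    have hco : (fun j : Fin k => f.coeff j) = fun j : Fin k => (f - X ^ k).coeff j := by
      funext j
      rw [coeff_sub, coeff_X_pow, if_neg (Nat.ne_of_lt j.isLt), sub_zero]
    rw [hco, ofVec_eq_self (monp_aux hf hfd)]
    ring
  right_inv := by
    intro v
    funext j
    simp only [coeff_add, coeff_X_pow, coeff_ofVec]
    simp [Nat.ne_of_lt j.isLt, j.isLt]

noncomputable def degEquiv (m : ℕ) : {u : F[X] // u.degree < (m : ℕ)} ≃ (Fin m → F) where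
  toFun u := fun j => u.1.coeff j
  invFun v := ⟨ofVec v, degree_ofVec v⟩
  left_inv := by
    rintro ⟨u, hu⟩
    exact Subtype.ext (ofVec_eq_self hu)
  right_inv := by
    intro v
    funext j
    simp [coeff_ofVec, j.isLt]

noncomputable def pairSplit (m : ℕ) :
    PairP F m ≃ MonP F m × {u : F[X] // u.degree < (m : ℕ)} where
  toFun p := (⟨p.1.1, p.2.1, p.2.2.1⟩, ⟨p.1.2, p.2.2.2⟩)
  invFun x := ⟨(x.1.1, x.2.1), x.1.2.1, x.1.2.2, x.2.2⟩
  left_inv := by rintro ⟨⟨f, u⟩, h⟩; rfl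
  right_inv := by rintro ⟨⟨f, hf⟩, ⟨u, hu⟩⟩; rfl

noncomputable def pairEquiv (m : ℕ) : PairP F m ≃ (Fin m → F) × (Fin m → F) :=
  (pairSplit m).trans (Equiv.prodCongr (monEquiv m) (degEquiv m))

instance instFinPair [Fintype F] (m : ℕ) : Finite (PairP F m) :=
  Finite.of_equiv _ (pairEquiv m).symm

instance instFinCPP [Fintype F] (m : ℕ) : Finite (CPP F m) := by
  have hinj : Function.Injective (fun p : CPP F m =>
      (⟨p.1, p.2.1, p.2.2.1, p.2.2.2.1⟩ : PairP F m)) := by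
    intro p p' hpp
    apply Subtype.ext
    have h2 := congrArg Subtype.val hpp
    simpa using h2
  haveI : Finite {p : F[X] × F[X] // p.1.Monic ∧ p.1.natDegree = m ∧ p.2.degree < (m : ℕ)} :=
    instFinPair m
  exact Finite.of_injective _ hinj

lemma card_MonP [Fintype F] (k : ℕ) : Nat.card (MonP F k) = Fintype.card F ^ k := by
  rw [Nat.card_congr (monEquiv k), Nat.card_fun]
  simp [Nat.card_eq_fintype_card]

instance instFinMonP [Fintype F] (k : ℕ) : Finite (MonP F k) :=
  Finite.of_equiv _ (monEquiv (F := F) k).symm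

lemma card_identity [Fintype F] (n : ℕ) :
    Nat.card (PairP F n)
      = ∑ k ∈ range (n + 1), Fintype.card F ^ k * Nat.card (CPP F (n - k)) := by
  classical
  have hθ : ∀ (k : Fin (n + 1)) (d : MonP F (k : ℕ)) (p : CPP F (n - (k : ℕ))),
      (d.1 * p.1.1).Monic ∧ (d.1 * p.1.1).natDegree = n ∧
        (d.1 * p.1.2).degree < (n : ℕ) := by
    rintro k ⟨d, hd, hdk⟩ ⟨⟨f₁, u₁⟩, hf₁, hf₁d, hu₁, hcop⟩
    have hkn : (k : ℕ) ≤ n := by have := k.isLt; omega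
    refine ⟨hd.mul hf₁, ?_, ?_⟩
    · show (d * f₁).natDegree = n
      rw [hd.natDegree_mul hf₁, hdk, hf₁d]; omega
    · show (d * u₁).degree < (n : ℕ)
      by_cases h0 : u₁ = 0
      · subst h0
        simp only [mul_zero, degree_zero]
        exact WithBot.bot_lt_coe n
      · have hd0 : d ≠ 0 := hd.ne_zero
        have hne : d * u₁ ≠ 0 := mul_ne_zero hd0 h0
        rw [← natDegree_lt_iff_degree_lt hne, natDegree_mul hd0 h0, hdk]
        have hu2 : u₁.natDegree < n - (k : ℕ) := (natDegree_lt_iff_degree_lt h0).2 hu₁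
        omega
  let θ : (Σ k : Fin (n + 1), MonP F (k : ℕ) × CPP F (n - (k : ℕ))) → PairP F n := fun s =>
    ⟨(s.2.1.1 * s.2.2.1.1, s.2.1.1 * s.2.2.1.2),
      (hθ s.1 s.2.1 s.2.2).1, (hθ s.1 s.2.1 s.2.2).2.1, (hθ s.1 s.2.1 s.2.2).2.2⟩
  have hgcd2 : ∀ d f₁ u₁ : F[X], d.Monic → IsCoprime f₁ u₁ → gcd (d * f₁) (d * u₁) = d := by
    intro d f₁ u₁ hd hcop
    rw [_root_.gcd_mul_left]
    have h2 : IsUnit (gcd f₁ u₁) := (gcd_isUnit_iff f₁ u₁).2 hcop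
    have h1 : gcd f₁ u₁ = 1 := by
      rw [← _root_.normalize_gcd]
      exact normalize_eq_one.2 h2
    rw [h1, mul_one]
    exact hd.normalize_eq_self
  have hbij : Function.Bijective θ := by
    constructor
    · rintro ⟨k, ⟨d, hd, hdk⟩, ⟨⟨f₁, u₁⟩, hf₁, hf₁d, hu₁, hcop⟩⟩
        ⟨k', ⟨d', hd', hdk'⟩, ⟨⟨f₁', u₁'⟩, hf₁', hf₁d', hu₁', hcop'⟩⟩ heq
      have hval : ((d * f₁, d * u₁) : F[X] × F[X]) = (d' * f₁', d' * u₁') :=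
        congrArg Subtype.val heq
      have hvf : d * f₁ = d' * f₁' := by
        have := congrArg Prod.fst hval; simpa using this
      have hvu : d * u₁ = d' * u₁' := by
        have := congrArg Prod.snd hval; simpa using this
      have g1 : gcd (d * f₁) (d * u₁) = d := hgcd2 d f₁ u₁ hd hcop
      have g2 : gcd (d' * f₁') (d' * u₁') = d' := hgcd2 d' f₁' u₁' hd' hcop'
      have hdd : d = d' := by rw [← g1, ← g2, hvf, hvu]
      subst hdd
      have hkk : k = k' := by
        apply Fin.ext
        rw [← hdk, ← hdk']
      subst hkk
      have hd0 : d ≠ 0 := hd.ne_zero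
      have hff : f₁ = f₁' := mul_left_cancel₀ hd0 hvf
      have huu : u₁ = u₁' := mul_left_cancel₀ hd0 hvu
      subst hff; subst huu
      rfl
    · rintro ⟨⟨f, u⟩, hm, hdeg, hu⟩
      have hfne : f ≠ 0 := hm.ne_zero
      set d := gcd f u with hDdef
      have hd0 : d ≠ 0 := by
        intro h
        rw [hDdef, _root_.gcd_eq_zero_iff] at h
        exact hfne h.1
      have hdmon : d.Monic := by
        have hmn := monic_normalize (p := d) hd0
        rw [hDdef, _root_.normalize_gcd] at hmn
        rw [hDdef]
        exact hmn
      have hkle : d.natDegree ≤ n := by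
        rw [← hdeg]
        exact natDegree_le_of_dvd (gcd_dvd_left f u) hfne
      obtain ⟨f₁, hf₁⟩ : d ∣ f := gcd_dvd_left f u
      obtain ⟨u₁, hu₁⟩ : d ∣ u := gcd_dvd_right f u
      have hf₁0 : f₁ ≠ 0 := by rintro rfl; rw [mul_zero] at hf₁; exact hfne hf₁
      have hf₁m : f₁.Monic := hdmon.of_mul_monic_left (hf₁ ▸ hm)
      have hf₁d : f₁.natDegree = n - d.natDegree := by
        have h2 : f.natDegree = d.natDegree + f₁.natDegree := by
          rw [hf₁, natDegree_mul hd0 hf₁0]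
        rw [hdeg] at h2; omega
      have hu₁deg : u₁.degree < ((n - d.natDegree : ℕ) : WithBot ℕ) := by
        by_cases h0 : u₁ = 0
        · subst h0; simp only [degree_zero]; exact WithBot.bot_lt_coe _
        · have hune : u ≠ 0 := by
            rw [hu₁]; exact mul_ne_zero hd0 h0
          have h3 : u.natDegree < n := (natDegree_lt_iff_degree_lt hune).2 hu
          have h4 : u.natDegree = d.natDegree + u₁.natDegree := by
            rw [hu₁, natDegree_mul hd0 h0]
          rw [← natDegree_lt_iff_degree_lt h0]
          omega
      have hcop : IsCoprime f₁ u₁ := by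
        have hgl := _root_.gcd_mul_left d f₁ u₁
        rw [hdmon.normalize_eq_self, ← hf₁, ← hu₁, ← hDdef] at hgl
        have hgg : d * gcd f₁ u₁ = d * 1 := by rw [mul_one, ← hgl]
        have h1 : gcd f₁ u₁ = 1 := mul_left_cancel₀ hd0 hgg
        exact (gcd_isUnit_iff f₁ u₁).1 (h1 ▸ isUnit_one)
      refine ⟨⟨⟨d.natDegree, by omega⟩, ⟨d, hdmon, rfl⟩,
        ⟨(f₁, u₁), hf₁m, hf₁d, hu₁deg, hcop⟩⟩, ?_⟩
      apply Subtype.ext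
      show (d * f₁, d * u₁) = (f, u)
      rw [← hf₁, ← hu₁]
  rw [← Nat.card_congr (Equiv.ofBijective θ hbij)]
  haveI : ∀ k : Fin (n + 1), Fintype (MonP F (k : ℕ) × CPP F (n - (k : ℕ))) :=
    fun k => Fintype.ofFinite _
  rw [Nat.card_eq_fintype_card, Fintype.card_sigma]
  rw [← Fin.sum_univ_eq_sum_range
    (fun k => Fintype.card F ^ k * Nat.card (CPP F (n - k))) (n + 1)]
  refine Finset.sum_congr rfl fun k _ => ?_
  rw [← Nat.card_eq_fintype_card, Nat.card_prod, card_MonP]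

lemma card_PairP [Fintype F] (n : ℕ) :
    Nat.card (PairP F n) = Fintype.card F ^ (2 * n) := by
  rw [Nat.card_congr (pairEquiv n), Nat.card_prod, Nat.card_fun]
  simp only [Nat.card_eq_fintype_card, Fintype.card_fin]
  rw [← pow_add, two_mul]

lemma card_CPP [Fintype F] {n : ℕ} (hn : 1 ≤ n) :
    Nat.card (CPP F n) = Fintype.card F ^ (2 * n) - Fintype.card F ^ (2 * n - 1) := by
  have hid1 := card_identity (F := F) n
  have hid2 := card_identity (F := F) (n - 1)
  rw [card_PairP] at hid1 hid2
  rw [Finset.sum_range_succ'] at hid1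
  have hstep : ∑ k ∈ range n, Fintype.card F ^ (k + 1) * Nat.card (CPP F (n - (k + 1)))
      = Fintype.card F * Fintype.card F ^ (2 * (n - 1)) := by
    rw [hid2, Finset.mul_sum]
    have hc : n - 1 + 1 = n := by omega
    refine Finset.sum_congr (by rw [hc]) fun k hk => ?_
    have h1 : n - (k + 1) = n - 1 - k := by omega
    rw [h1, pow_succ]
    ring
  rw [hstep] at hid1
  have h2 : Fintype.card F * Fintype.card F ^ (2 * (n - 1)) = Fintype.card F ^ (2 * n - 1) := by
    rw [← pow_succ']
    congr 1
    omega
  rw [h2] at hid1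
  simp only [pow_zero, one_mul, Nat.sub_zero] at hid1
  omega

lemma hank_count [Fintype F] {n : ℕ} (hn : 1 ≤ n) :
    Nat.card {a : Fin (2 * n - 1) → F // IsUnit (hankM n a).det}
      = (Fintype.card F - 1) * Fintype.card F ^ (2 * n - 2) := by
  classical
  have h1 := count_main (F := F) hn
  have e : {p : (Fin n → F) × (Fin n → F) //
      IsCoprime (X ^ n - ofVec p.1) (ofVec p.2)} ≃ CPP F n :=
    { toFun := fun p => ⟨(X ^ n - ofVec p.1.1, ofVec p.1.2), monic_fc p.1.1,
        natDegree_fc hn p.1.1, degree_ofVec p.1.2, p.2⟩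
      invFun := fun p => ⟨(fun j => -((p.1.1 - X ^ n).coeff j), fun j => p.1.2.coeff j), by
        have h1 : ofVec (fun j : Fin n => -((p.1.1 - X ^ n).coeff j)) = X ^ n - p.1.1 := by
          have hneg : (fun j : Fin n => -((p.1.1 - X ^ n).coeff j))
              = - (fun j : Fin n => (p.1.1 - X ^ n).coeff j) := rfl
          rw [hneg, ofVec_neg, ofVec_eq_self (monp_aux p.2.1 p.2.2.1), neg_sub]
        rw [h1, sub_sub_cancel, ofVec_eq_self p.2.2.2.1]
        exact p.2.2.2.2⟩
      left_inv := by
        rintro ⟨⟨c, v⟩, hp⟩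
        apply Subtype.ext
        show (_, _) = (c, v)
        have hc : (fun j : Fin n => -(((X ^ n - ofVec c) - X ^ n).coeff j)) = c := by
          funext j
          rw [sub_sub_cancel_left, coeff_neg, neg_neg, coeff_ofVec]
          simp [j.isLt]
        have hv : (fun j : Fin n => (ofVec v).coeff j) = v := by
          funext j
          rw [coeff_ofVec]
          simp [j.isLt]
        rw [hc, hv]
      right_inv := by
        rintro ⟨⟨f, u⟩, hm, hd, hu, hcop⟩
        apply Subtype.ext
        show (X ^ n - ofVec _, ofVec _) = (f, u)
        have h1 : ofVec (fun j : Fin n => -((f - X ^ n).coeff j)) = X ^ n - f := by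
          have hneg : (fun j : Fin n => -((f - X ^ n).coeff j))
              = - (fun j : Fin n => (f - X ^ n).coeff j) := rfl
          rw [hneg, ofVec_neg, ofVec_eq_self (monp_aux hm hd), neg_sub]
        rw [h1, sub_sub_cancel, ofVec_eq_self hu] }
  rw [Nat.card_congr e, card_CPP hn] at h1
  have hq1 : 0 < Fintype.card F := Fintype.card_pos
  apply Nat.eq_of_mul_eq_mul_left hq1
  rw [h1]
  have e1 : Fintype.card F ^ (2 * n) = Fintype.card F ^ (2 * n - 1) * Fintype.card F := by
    rw [← pow_succ]; congr 1; omega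
  have e2 : Fintype.card F ^ (2 * n - 1)
      = Fintype.card F ^ (2 * n - 2) * Fintype.card F := by
    rw [← pow_succ]; congr 1; omega
  have e3 : Fintype.card F * ((Fintype.card F - 1) * Fintype.card F ^ (2 * n - 2))
      = (Fintype.card F - 1) * (Fintype.card F ^ (2 * n - 2) * Fintype.card F) := by ring
  rw [e3, Nat.sub_mul, one_mul, e1, e2]
  congr 1
  ring

/-- the Toeplitz matrix of a vector of `2n-1` diagonal entries. -/
def toepM (n : ℕ) (a : Fin (2 * n - 1) → F) : Matrix (Fin n) (Fin n) F :=
  fun i j => a ⟨(j : ℕ) + (n - 1) - i, by have := i.isLt; have := j.isLt; omega⟩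

lemma isUnit_toep_iff_hank {n : ℕ} (a : Fin (2 * n - 1) → F) :
    IsUnit (toepM n a).det ↔ IsUnit (hankM n a).det := by
  have hsub : hankM n a = (toepM n a).submatrix (Fin.revPerm : Equiv.Perm (Fin n)) id := by
    funext i j
    show a _ = a _
    congr 1
    ext
    simp [Fin.val_rev]
    have := i.isLt; have := j.isLt
    omega
  rw [hsub, Matrix.det_permute, isUnit_iff_ne_zero, isUnit_iff_ne_zero, mul_ne_zero_iff]
  have hsign : ((Equiv.Perm.sign (Fin.revPerm : Equiv.Perm (Fin n)) : ℤ) : F) ≠ 0 := by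
    rcases Int.units_eq_one_or (Equiv.Perm.sign (Fin.revPerm : Equiv.Perm (Fin n))) with h | h <;>
      rw [h] <;> simp
  exact (and_iff_right hsign).symm

end ToeplitzAux

/-- `M` is a Toeplitz matrix: entries depend only on the difference of column and row index. -/
def IsToeplitz {ℓ : ℕ} {R : Type*} (M : Matrix (Fin ℓ) (Fin ℓ) R) : Prop :=
  ∀ i j i' j' : Fin ℓ, (j : ℤ) - (i : ℤ) = (j' : ℤ) - (i' : ℤ) → M i j = M i' j'

open ToeplitzAux in
/-- The number of invertible `ℓ×ℓ` Toeplitz matrices over `F_q` (`q` prime) is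
`(q-1) * q^(2ℓ-2)`, i.e. a fraction exactly `1 - 1/q` of all `q^(2ℓ-1)` Toeplitz matrices. -/
theorem stmt1 (q ℓ : ℕ) (hq : q.Prime) (hℓ : 1 ≤ ℓ) :
    Nat.card {M : Matrix (Fin ℓ) (Fin ℓ) (ZMod q) // IsToeplitz M ∧ IsUnit M.det} =
      (q - 1) * q ^ (2 * ℓ - 2) := by
  haveI : Fact q.Prime := ⟨hq⟩
  haveI : NeZero q := ⟨hq.ne_zero⟩
  have htoep : ∀ a : Fin (2 * ℓ - 1) → ZMod q, IsToeplitz (toepM ℓ a) := by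
    intro a i j i' j' h
    show a _ = a _
    congr 1
    ext
    simp only [Fin.val_mk]
    have h' : ((j : ℕ) : ℤ) - ((i : ℕ) : ℤ) = ((j' : ℕ) : ℤ) - ((i' : ℕ) : ℤ) := by
      exact_mod_cast h
    have := i.isLt; have := j.isLt; have := i'.isLt; have := j'.isLt
    omega
  have hrc : ∀ (M : Matrix (Fin ℓ) (Fin ℓ) (ZMod q)), IsToeplitz M →
      toepM ℓ (fun k => M ⟨ℓ - 1 - (k : ℕ), by have := k.isLt; omega⟩
        ⟨(k : ℕ) - (ℓ - 1), by have := k.isLt; omega⟩) = M := by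
    intro M hM
    funext i j
    show M _ _ = M i j
    apply hM
    have := i.isLt; have := j.isLt
    push_cast
    omega
  have E : {M : Matrix (Fin ℓ) (Fin ℓ) (ZMod q) // IsToeplitz M ∧ IsUnit M.det} ≃
      {a : Fin (2 * ℓ - 1) → ZMod q // IsUnit (toepM ℓ a).det} :=
    { toFun := fun M => ⟨fun k => M.1 ⟨ℓ - 1 - (k : ℕ), by have := k.isLt; omega⟩
        ⟨(k : ℕ) - (ℓ - 1), by have := k.isLt; omega⟩, by
          rw [hrc M.1 M.2.1]; exact M.2.2⟩
      invFun := fun a => ⟨toepM ℓ a.1, htoep a.1, a.2⟩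
      left_inv := fun M => Subtype.ext (hrc M.1 M.2.1)
      right_inv := fun a => Subtype.ext (funext fun k => by
        show a.1 _ = a.1 k
        apply congrArg
        apply Fin.ext
        simp only [Fin.val_mk]
        have := k.isLt
        omega) }
  rw [Nat.card_congr E,
    Nat.card_congr (Equiv.subtypeEquivRight (fun a => isUnit_toep_iff_hank a)),
    hank_count hℓ, ZMod.card q]
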